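/- arXiv:1805.09805 — 3 statements merged into one kernel-verified Lean document; each statement's English description precedes it below -/
import Mathlib

section
/- Let A be a perfect finite-dimensional associative F-algebra (i.e. the linear span of all products xy with x, y ∈ A equals A) and let S be a Levi subalgebra of A. Then A is S-modgenerated, i.e. A is generated as an algebra by its non-trivial simple S-sub-bimodules. -/
set_option linter.unusedSectionVars false
set_option maxHeartbeats 4000000

universe u v

/-- A non-unital `F`-algebra is (finite-dimensional) semisimple iff it is isomorphic,
as a non-unital `F`-algebra, to a finite direct sum of full matrix algebras over `F`. -/
def IsMatrixSemisimple (F : Type u) (S : Type v) [Field F] [NonUnitalRing S]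
    [Module F S] : Prop :=
  ∃ (m : ℕ) (n : Fin m → ℕ) (_hn : ∀ i, 0 < n i)
    (f : S →ₙₐ[F] ∀ i, Matrix (Fin (n i)) (Fin (n i)) F), Function.Bijective f

variable (F : Type u) {A : Type v} [Field F] [NonUnitalRing A] [Module F A]
  [SMulCommClass F A A] [IsScalarTower F A A]

/-- `W` is an `S`-sub-bimodule (of `A`): an `F`-subspace with `SW + WS ⊆ W`. -/
def IsSubBimod (S : NonUnitalSubalgebra F A) (W : Submodule F A) : Prop :=
  ∀ s ∈ S, ∀ w ∈ W, s * w ∈ W ∧ w * s ∈ W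

/-- The non-trivial simple `S`-sub-bimodules contained in a subset `B` of `A`. -/
def SimpleBimods (S : NonUnitalSubalgebra F A) (B : Set A) : Set (Submodule F A) :=
  {W | (W : Set A) ⊆ B ∧ W ≠ ⊥ ∧ IsSubBimod F S W ∧
    -- non-trivial: `SW + WS ≠ 0`
    (∃ s ∈ S, ∃ w ∈ W, s * w ≠ 0 ∨ w * s ≠ 0) ∧
    -- simple: the only `S`-sub-bimodules of `W` are `0` and `W`
    (∀ W' : Submodule F A, W' ≤ W → IsSubBimod F S W' → W' = ⊥ ∨ W' = W)}

/-- The subalgebra generated by the non-trivial simple `S`-sub-bimodules of `B`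
(denoted `B_S` in the paper). -/
def modGenSubalg (S : NonUnitalSubalgebra F A) (B : Set A) : NonUnitalSubalgebra F A :=
  NonUnitalAlgebra.adjoin F (⋃ W ∈ SimpleBimods F S B, (W : Set A))

/-- Powers `J, J², J³, …` of a subspace `J` of `A`: `subPow J k = J^(k+1)`. -/
def subPow (J : Submodule F A) : ℕ → Submodule F A
  | 0 => J
  | k + 1 => Submodule.span F {x : A | ∃ a ∈ subPow J k, ∃ b ∈ J, x = a * b}

/-- The (Jacobson) radical of the finite-dimensional algebra `A`: the largest
nilpotent two-sided ideal, i.e. the sum of all nilpotent two-sided ideals. -/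
def radSub : Submodule F A :=
  sSup {J : Submodule F A |
    (∀ a : A, ∀ x ∈ J, a * x ∈ J ∧ x * a ∈ J) ∧ ∃ k : ℕ, subPow F J k = ⊥}

/-! ### Auxiliary lemmas -/

lemma mul_right_mem_of_span {T : Set A} {v : A} {W : Submodule F A}
    (h : ∀ t ∈ T, t * v ∈ W) : ∀ u ∈ Submodule.span F T, u * v ∈ W := by
  intro u hu
  induction hu using Submodule.span_induction with
  | mem t ht => exact h t ht
  | zero => rw [zero_mul]; exact W.zero_mem
  | add a b _ _ ha hb => rw [add_mul]; exact W.add_mem ha hb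
  | smul r a _ ha => rw [smul_mul_assoc]; exact W.smul_mem r ha

lemma subPow_mono {J K : Submodule F A} (h : J ≤ K) : ∀ k, subPow F J k ≤ subPow F K k := by
  intro k
  induction k with
  | zero => exact h
  | succ k ih =>
    refine Submodule.span_le.2 ?_
    rintro x ⟨a, ha, b, hb, rfl⟩
    exact Submodule.subset_span ⟨a, ih ha, b, h hb, rfl⟩

lemma mem_subPow_succ {J : Submodule F A} {k : ℕ} {a b : A}
    (ha : a ∈ subPow F J k) (hb : b ∈ J) : a * b ∈ subPow F J (k + 1) :=
  Submodule.subset_span ⟨a, ha, b, hb, rfl⟩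

lemma subPow_split (K : Submodule F A) :
    ∀ (b a : ℕ), subPow F K (a + b + 1) ≤
      Submodule.span F {x : A | ∃ u ∈ subPow F K a, ∃ v ∈ subPow F K b, x = u * v} := by
  intro b
  induction b with
  | zero => intro a; exact le_refl _
  | succ b ih =>
    intro a
    have harith : a + (b + 1) + 1 = (a + b + 1) + 1 := by omega
    rw [harith]
    refine Submodule.span_le.2 ?_
    rintro y ⟨uu, hu, vv, hv, rfl⟩
    refine mul_right_mem_of_span F (fun t ht => ?_) uu (ih a hu)
    obtain ⟨u', hu', v', hv', rfl⟩ := ht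
    exact Submodule.subset_span ⟨u', hu', v' * vv, mem_subPow_succ F hv' hv, mul_assoc u' v' vv⟩

lemma nilIdeal_sup {I J : Submodule F A}
    (hIi : ∀ a : A, ∀ x ∈ I, a * x ∈ I ∧ x * a ∈ I)
    (hJi : ∀ a : A, ∀ x ∈ J, a * x ∈ J ∧ x * a ∈ J)
    (hIn : ∃ k, subPow F I k = ⊥) (hJn : ∃ k, subPow F J k = ⊥) :
    (∀ a : A, ∀ x ∈ I ⊔ J, a * x ∈ I ⊔ J ∧ x * a ∈ I ⊔ J) ∧
      ∃ k, subPow F (I ⊔ J) k = ⊥ := by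
  constructor
  · intro a x hx
    obtain ⟨xi, hxi, xj, hxj, rfl⟩ := Submodule.mem_sup.1 hx
    constructor
    · rw [mul_add]
      exact Submodule.add_mem _ (Submodule.mem_sup_left (hIi a xi hxi).1)
        (Submodule.mem_sup_right (hJi a xj hxj).1)
    · rw [add_mul]
      exact Submodule.add_mem _ (Submodule.mem_sup_left (hIi a xi hxi).2)
        (Submodule.mem_sup_right (hJi a xj hxj).2)
  · obtain ⟨mI, hmI⟩ := hIn
    obtain ⟨nJ, hnJ⟩ := hJn
    have hstep : ∀ k, subPow F (I ⊔ J) k ≤ I ⊔ subPow F J k := by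
      intro k
      induction k with
      | zero => exact le_refl _
      | succ k ih =>
        refine Submodule.span_le.2 ?_
        rintro y ⟨a, ha, b, hb, rfl⟩
        obtain ⟨aI, haI, aJ, haJ, rfl⟩ := Submodule.mem_sup.1 (ih ha)
        obtain ⟨bI, hbI, bJ, hbJ, rfl⟩ := Submodule.mem_sup.1 hb
        have heq : (aI + aJ) * (bI + bJ) =
            ((aI + aJ) * bI + aI * bJ) + aJ * bJ := by noncomm_ring
        rw [heq]
        refine Submodule.add_mem _ (Submodule.mem_sup_left ?_)
          (Submodule.mem_sup_right (mem_subPow_succ F haJ hbJ))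
        exact Submodule.add_mem _ ((hIi _ _ hbI).1) ((hIi _ _ haI).2)
    have hIJ : subPow F (I ⊔ J) nJ ≤ I := by
      have := hstep nJ
      rwa [hnJ, sup_bot_eq] at this
    have hclaim : ∀ l, ∃ k, subPow F (I ⊔ J) k ≤ subPow F I l := by
      intro l
      induction l with
      | zero => exact ⟨nJ, hIJ⟩
      | succ l ih =>
        obtain ⟨k, hk⟩ := ih
        refine ⟨k + nJ + 1, (subPow_split F (I ⊔ J) nJ k).trans (Submodule.span_le.2 ?_)⟩
        rintro y ⟨uu, hu, vv, hv, rfl⟩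
        exact Submodule.subset_span ⟨uu, hk hu, vv, hIJ hv, rfl⟩
    obtain ⟨k, hk⟩ := hclaim mI
    exact ⟨k, le_bot_iff.1 (hmI ▸ hk)⟩

lemma radSet_bot : (∀ a : A, ∀ x ∈ (⊥ : Submodule F A), a * x ∈ (⊥ : Submodule F A) ∧
    x * a ∈ (⊥ : Submodule F A)) ∧ ∃ k, subPow F (⊥ : Submodule F A) k = ⊥ := by
  refine ⟨fun a x hx => ?_, 0, rfl⟩
  rw [Submodule.mem_bot] at hx
  subst hx
  simp

lemma radSet_directed : DirectedOn (· ≤ ·) {J : Submodule F A |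
    (∀ a : A, ∀ x ∈ J, a * x ∈ J ∧ x * a ∈ J) ∧ ∃ k : ℕ, subPow F J k = ⊥} := by
  rintro I ⟨hIi, hIn⟩ J ⟨hJi, hJn⟩
  exact ⟨I ⊔ J, nilIdeal_sup F hIi hJi hIn hJn, le_sup_left, le_sup_right⟩

lemma radSub_mem_iff {zz : A} : zz ∈ radSub F (A := A) ↔ ∃ K : Submodule F A,
    ((∀ a : A, ∀ x ∈ K, a * x ∈ K ∧ x * a ∈ K) ∧ ∃ k, subPow F K k = ⊥) ∧ zz ∈ K := by
  rw [radSub, Submodule.mem_sSup_of_directed ⟨⊥, radSet_bot F⟩ (radSet_directed F)]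
  simp only [Set.mem_setOf_eq]

lemma radSub_ideal : ∀ a : A, ∀ x ∈ radSub F (A := A),
    a * x ∈ radSub F (A := A) ∧ x * a ∈ radSub F (A := A) := by
  intro a x hx
  obtain ⟨K, hK, hxK⟩ := (radSub_mem_iff F).1 hx
  exact ⟨(radSub_mem_iff F).2 ⟨K, hK, (hK.1 a x hxK).1⟩,
    (radSub_mem_iff F).2 ⟨K, hK, (hK.1 a x hxK).2⟩⟩

lemma radSub_nilpotent [FiniteDimensional F A] :
    ∃ k, subPow F (radSub F (A := A)) k = ⊥ := by
  classical
  obtain ⟨s, hs⟩ := IsNoetherian.noetherian (radSub F (A := A))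
  have hsub : ∀ t : Finset A, (∀ x ∈ t, x ∈ radSub F (A := A)) →
      ∃ K : Submodule F A, ((∀ a : A, ∀ x ∈ K, a * x ∈ K ∧ x * a ∈ K) ∧
        ∃ k, subPow F K k = ⊥) ∧ ∀ x ∈ t, x ∈ K := by
    intro t
    induction t using Finset.induction with
    | empty => exact fun _ => ⟨⊥, radSet_bot F, by simp⟩
    | insert a t' hni ih =>
      intro hmem
      obtain ⟨K, hK, hKt⟩ := ih (fun x hx => hmem x (Finset.mem_insert_of_mem hx))
      obtain ⟨Ka, hKa, haKa⟩ := (radSub_mem_iff F).1 (hmem a (Finset.mem_insert_self a t'))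
      obtain ⟨K', hK', hKK', hKaK'⟩ := radSet_directed F K hK Ka hKa
      exact ⟨K', hK', fun x hx => by
        rcases Finset.mem_insert.1 hx with h | h
        · exact hKaK' (h ▸ haKa)
        · exact hKK' (hKt x h)⟩
  have hmem : ∀ x ∈ s, x ∈ radSub F (A := A) := by
    intro x hx
    rw [← hs]
    exact Submodule.subset_span hx
  obtain ⟨K, hK, hsK⟩ := hsub s hmem
  have hle : radSub F (A := A) ≤ K := by
    rw [← hs]
    exact Submodule.span_le.2 (fun x hx => hsK x hx)
  obtain ⟨k, hk⟩ := hK.2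
  exact ⟨k, le_bot_iff.1 (hk ▸ subPow_mono F hle k)⟩

lemma mat_mul_std {k : ℕ} (M : Matrix (Fin k) (Fin k) F) (p q : Fin k) :
    M * Matrix.single p q 1 = ∑ r, M r p • Matrix.single r q 1 := by
  ext a b
  simp [Matrix.mul_apply, Matrix.single, Matrix.sum_apply, ite_and,
    Finset.sum_ite_eq, Finset.sum_ite_eq']

lemma std_mul_mat {k : ℕ} (M : Matrix (Fin k) (Fin k) F) (p q : Fin k) :
    Matrix.single p q 1 * M = ∑ r, M q r • Matrix.single p r 1 := by
  ext a b
  simp [Matrix.mul_apply, Matrix.single, Matrix.sum_apply, ite_and,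
    Finset.sum_ite_eq, Finset.sum_ite_eq']

lemma std_diag_sum {k : ℕ} : ∑ p : Fin k, Matrix.single p p (1 : F) = 1 := by
  ext a b
  simp [Matrix.single, Matrix.sum_apply, ite_and, Finset.sum_ite_eq,
    Finset.sum_ite_eq', Matrix.one_apply]

section Units

variable {F}
variable {m : ℕ} {n : Fin m → ℕ} {S : NonUnitalSubalgebra F A}
  {f : S →ₙₐ[F] ∀ i, Matrix (Fin (n i)) (Fin (n i)) F} (hf : Function.Bijective f)

noncomputable def matUnit (i : Fin m) (p q : Fin (n i)) : S :=
  Function.surjInv hf.2 (Pi.single i (Matrix.single p q 1))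

noncomputable def sUnit : S := Function.surjInv hf.2 1

lemma f_matUnit (i : Fin m) (p q : Fin (n i)) :
    f (matUnit hf i p q) = Pi.single i (Matrix.single p q 1) :=
  Function.rightInverse_surjInv hf.2 _

lemma f_sUnit : f (sUnit hf) = 1 := Function.rightInverse_surjInv hf.2 _

lemma matUnit_mul (i : Fin m) (p q q' r : Fin (n i)) :
    matUnit hf i p q * matUnit hf i q' r = if q = q' then matUnit hf i p r else 0 := by
  classical
  apply hf.1
  rw [map_mul, f_matUnit, f_matUnit, ← Pi.single_mul]
  by_cases h : q = q'
  · subst h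
    rw [if_pos rfl, f_matUnit, Matrix.single_mul_single_same, one_mul]
  · rw [if_neg h, map_zero, Matrix.single_mul_single_of_ne (h := h), Pi.single_zero]

lemma matUnitA_mul (i : Fin m) (p q q' r : Fin (n i)) :
    (matUnit hf i p q : A) * (matUnit hf i q' r : A) =
      if q = q' then (matUnit hf i p r : A) else 0 := by
  have h := congrArg (Subtype.val) (matUnit_mul hf i p q q' r)
  rw [apply_ite Subtype.val] at h
  exact h

lemma sUnit_mul_left (s : S) : sUnit hf * s = s := by
  apply hf.1
  rw [map_mul, f_sUnit, one_mul]

lemma sUnit_mul_right (s : S) : s * sUnit hf = s := by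
  apply hf.1
  rw [map_mul, f_sUnit, mul_one]

lemma sUnitA_mul_left {a : A} (ha : a ∈ S) : (sUnit hf : A) * a = a :=
  congrArg Subtype.val (sUnit_mul_left hf ⟨a, ha⟩)

lemma sUnitA_mul_right {a : A} (ha : a ∈ S) : a * (sUnit hf : A) = a :=
  congrArg Subtype.val (sUnit_mul_right hf ⟨a, ha⟩)

lemma sUnitA_idem : (sUnit hf : A) * (sUnit hf : A) = (sUnit hf : A) :=
  sUnitA_mul_left hf (sUnit hf).2

lemma smul_matUnit (s : S) (i : Fin m) (p q : Fin (n i)) :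
    s * matUnit hf i p q = ∑ r, f s i r p • matUnit hf i r q := by
  classical
  apply hf.1
  rw [map_mul, f_matUnit, map_sum]
  simp_rw [map_smul, f_matUnit]
  funext j
  by_cases h : j = i
  · subst h
    rw [Finset.sum_apply]
    simp only [Pi.mul_apply, Pi.single_eq_same, Pi.smul_apply]
    rw [mat_mul_std]
  · rw [Finset.sum_apply]
    simp only [Pi.mul_apply, Pi.single_eq_of_ne h, Pi.smul_apply, mul_zero, smul_zero,
      Finset.sum_const_zero]

lemma matUnit_smul (s : S) (i : Fin m) (p q : Fin (n i)) :
    matUnit hf i p q * s = ∑ r, f s i q r • matUnit hf i p r := by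
  classical
  apply hf.1
  rw [map_mul, f_matUnit, map_sum]
  simp_rw [map_smul, f_matUnit]
  funext j
  by_cases h : j = i
  · subst h
    rw [Finset.sum_apply]
    simp only [Pi.mul_apply, Pi.single_eq_same, Pi.smul_apply]
    rw [std_mul_mat]
  · rw [Finset.sum_apply]
    simp only [Pi.mul_apply, Pi.single_eq_of_ne h, Pi.smul_apply, zero_mul, smul_zero,
      Finset.sum_const_zero]

lemma smul_matUnitA {a : A} (ha : a ∈ S) (i : Fin m) (p q : Fin (n i)) :
    ∃ c : Fin (n i) → F, a * (matUnit hf i p q : A) = ∑ r, c r • (matUnit hf i r q : A) := by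
  refine ⟨fun r => f ⟨a, ha⟩ i r p, ?_⟩
  have h := congrArg Subtype.val (smul_matUnit hf ⟨a, ha⟩ i p q)
  rw [AddSubmonoidClass.coe_finset_sum] at h
  simp only [SetLike.val_smul] at h
  exact h

lemma matUnitA_smul {a : A} (ha : a ∈ S) (i : Fin m) (p q : Fin (n i)) :
    ∃ c : Fin (n i) → F, (matUnit hf i p q : A) * a = ∑ r, c r • (matUnit hf i p r : A) := by
  refine ⟨fun r => f ⟨a, ha⟩ i q r, ?_⟩
  have h := congrArg Subtype.val (matUnit_smul hf ⟨a, ha⟩ i p q)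
  rw [AddSubmonoidClass.coe_finset_sum] at h
  simp only [SetLike.val_smul] at h
  exact h

lemma sUnit_sum : (sUnit hf : A) = ∑ i, ∑ p, (matUnit hf i p p : A) := by
  classical
  have h : sUnit hf = ∑ i, ∑ p, matUnit hf i p p := by
    apply hf.1
    rw [f_sUnit, map_sum]
    simp_rw [map_sum, f_matUnit]
    funext j
    rw [Finset.sum_apply]
    rw [Finset.sum_eq_single j]
    · rw [Finset.sum_apply]
      simp only [Pi.single_eq_same]
      rw [std_diag_sum]
      rfl
    · intro i _ hij
      rw [Finset.sum_apply]
      refine Finset.sum_eq_zero fun p _ => ?_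
      exact Pi.single_eq_of_ne hij.symm _
    · intro h
      exact absurd (Finset.mem_univ j) h
  rw [h, AddSubmonoidClass.coe_finset_sum]
  congr 1
  funext i
  rw [AddSubmonoidClass.coe_finset_sum]

end Units

lemma simpleBimod_of_family (S : NonUnitalSubalgebra F A) {ι : Type} [Fintype ι]
    [DecidableEq ι] [Nonempty ι] (v : ι → A) (x : A) (hx : x ≠ 0)
    (hcl : ∀ s ∈ S, ∀ i, s * v i ∈ Submodule.span F (Set.range v) ∧
      v i * s ∈ Submodule.span F (Set.range v))
    (hnt : ∃ s ∈ S, ∃ i, s * v i ≠ 0 ∨ v i * s ≠ 0)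
    (hext : ∀ i, ∃ φ : A →ₗ[F] A,
      (∀ W' : Submodule F A, IsSubBimod F S W' → ∀ w ∈ W', φ w ∈ W') ∧
      ∀ j, φ (v j) = if j = i then x else 0)
    (hgen : ∀ W' : Submodule F A, IsSubBimod F S W' → x ∈ W' → ∀ i, v i ∈ W') :
    Submodule.span F (Set.range v) ∈ SimpleBimods F S (Set.univ : Set A) := by
  set W := Submodule.span F (Set.range v) with hWdef
  have hvW : ∀ i, v i ∈ W := fun i => Submodule.subset_span ⟨i, rfl⟩
  have hbiW : IsSubBimod F S W := by
    intro s hs w hw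
    have h1 : ∀ w ∈ W, s * w ∈ W := by
      intro w hw
      induction hw using Submodule.span_induction with
      | mem t ht => obtain ⟨i, rfl⟩ := ht; exact (hcl s hs i).1
      | zero => rw [mul_zero]; exact W.zero_mem
      | add a b _ _ ha hb => rw [mul_add]; exact W.add_mem ha hb
      | smul r a _ ha => rw [mul_smul_comm]; exact W.smul_mem r ha
    have h2 : ∀ w ∈ W, w * s ∈ W := by
      intro w hw
      induction hw using Submodule.span_induction with
      | mem t ht => obtain ⟨i, rfl⟩ := ht; exact (hcl s hs i).2
      | zero => rw [zero_mul]; exact W.zero_mem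
      | add a b _ _ ha hb => rw [add_mul]; exact W.add_mem ha hb
      | smul r a _ ha => rw [smul_mul_assoc]; exact W.smul_mem r ha
    exact ⟨h1 w hw, h2 w hw⟩
  have hvne : ∀ i₀ : ι, v i₀ ≠ 0 := by
    intro i₀ h0
    obtain ⟨φ, _, hφv⟩ := hext i₀
    have := hφv i₀
    rw [if_pos rfl, h0, map_zero] at this
    exact hx this.symm
  refine ⟨Set.subset_univ _, ?_, hbiW, ?_, ?_⟩
  · intro hbot
    exact hvne (Classical.arbitrary ι) (Submodule.span_eq_bot.mp hbot _ ⟨_, rfl⟩)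
  · obtain ⟨s, hs, i, hi⟩ := hnt
    exact ⟨s, hs, v i, hvW i, hi⟩
  · intro W' hle hbi'
    rcases eq_or_ne W' ⊥ with h | h
    · exact Or.inl h
    right
    obtain ⟨w', hw'W', hw'ne⟩ := Submodule.exists_mem_ne_zero_of_ne_bot h
    obtain ⟨co, hco⟩ := (Submodule.mem_span_range_iff_exists_fun F).1 (hle hw'W')
    have hico : ∃ i, co i ≠ 0 := by
      by_contra hall
      push_neg at hall
      refine hw'ne ?_
      rw [← hco]
      refine Finset.sum_eq_zero fun i _ => ?_
      rw [hall i, zero_smul]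
    obtain ⟨i, hi⟩ := hico
    obtain ⟨φ, hφW, hφv⟩ := hext i
    have hφw' : φ w' = co i • x := by
      rw [← hco, map_sum]
      rw [Finset.sum_eq_single i]
      · rw [map_smul, hφv i, if_pos rfl]
      · intro j _ hj
        rw [map_smul, hφv j, if_neg hj, smul_zero]
      · intro hni
        exact absurd (Finset.mem_univ i) hni
    have hxW' : x ∈ W' := by
      have h1 := hφW W' hbi' w' hw'W'
      rw [hφw'] at h1
      have h2 := W'.smul_mem (co i)⁻¹ h1
      rwa [inv_smul_smul₀ hi] at h2
    refine le_antisymm hle (Submodule.span_le.2 ?_)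
    rintro _ ⟨i', rfl⟩
    exact hgen W' hbi' hxW' i'

/-- a perfect finite-dimensional algebra is `S`-modgenerated for any
Levi subalgebra `S` (a semisimple subalgebra with `A = S ⊕ rad A`). -/
theorem perfect_implies_modGenerated
    [IsAlgClosed F] [FiniteDimensional F A]
    -- `A` is perfect: the span of all products `xy` is `A`
    (hA_perf : Submodule.span F {x : A | ∃ a b : A, x = a * b} = ⊤)
    -- `S` is a Levi subalgebra: semisimple, with `A = S ⊕ rad A` as `F`-vector spaces
    (S : NonUnitalSubalgebra F A) (hS_ss : IsMatrixSemisimple F S)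
    (hLevi : IsCompl (NonUnitalSubalgebra.toSubmodule S) (radSub F (A := A))) :
    modGenSubalg F S (Set.univ : Set A) = ⊤ := by
  classical
  obtain ⟨m, n, hn, f, hf⟩ := hS_ss
  set M := modGenSubalg F S (Set.univ : Set A) with hMdef
  have memM_of_simple : ∀ W ∈ SimpleBimods F S (Set.univ : Set A), ∀ t ∈ W, t ∈ M :=
    fun W hW t ht => NonUnitalAlgebra.subset_adjoin F (Set.mem_biUnion hW ht)
  set e : A := (sUnit hf : A) with hedef
  have heS : e ∈ S := (sUnit hf).2
  have hee : e * e = e := sUnitA_idem hf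
  have hel : ∀ a ∈ S, e * a = a := fun a ha => sUnitA_mul_left hf ha
  have her : ∀ a ∈ S, a * e = a := fun a ha => sUnitA_mul_right hf ha
  set z : (i : Fin m) → Fin (n i) := fun i => ⟨0, hn i⟩ with hzdef
  set U : (i : Fin m) → Fin (n i) → Fin (n i) → A := fun i p q => (matUnit hf i p q : A)
    with hUdef
  have hUS : ∀ i p q, U i p q ∈ S := fun i p q => (matUnit hf i p q).2
  have hUmul : ∀ i p q q' r, U i p q * U i q' r = if q = q' then U i p r else 0 :=
    fun i p q q' r => matUnitA_mul hf i p q q' r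
  have hUleft : ∀ a ∈ S, ∀ (i : Fin m) (p q : Fin (n i)), ∃ c : Fin (n i) → F,
      a * U i p q = ∑ r, c r • U i r q := fun a ha i p q => smul_matUnitA hf ha i p q
  have hUright : ∀ a ∈ S, ∀ (i : Fin m) (p q : Fin (n i)), ∃ c : Fin (n i) → F,
      U i p q * a = ∑ r, c r • U i p r := fun a ha i p q => matUnitA_smul hf ha i p q
  have hesum : e = ∑ i, ∑ p, U i p p := sUnit_sum hf
  have hkillR : ∀ b : A, (b - b * e) * e = 0 := by
    intro b
    rw [sub_mul, mul_assoc b e e, hee, sub_self]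
  have hkillL : ∀ b : A, e * (b - e * b) = 0 := by
    intro b
    rw [mul_sub, ← mul_assoc e e b, hee, sub_self]
  -- Type L simple bimodules
  have typeL : ∀ (i : Fin m) (x : A), U i (z i) (z i) * x = x → x * e = 0 →
      ∀ p, U i p (z i) * x ∈ M := by
    intro i x hx1 hxe p
    by_cases hx0 : x = 0
    · rw [hx0, mul_zero]
      exact zero_mem M
    haveI : Nonempty (Fin (n i)) := ⟨z i⟩
    have hxs : ∀ a ∈ S, x * a = 0 := by
      intro a ha
      calc x * a = x * (e * a) := by rw [hel a ha]
        _ = (x * e) * a := (mul_assoc x e a).symm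
        _ = 0 := by rw [hxe, zero_mul]
    have hW := simpleBimod_of_family F S (fun p => U i p (z i) * x) x hx0 ?_ ?_ ?_ ?_
    · exact memM_of_simple _ hW (U i p (z i) * x) (Submodule.subset_span ⟨p, rfl⟩)
    · intro s hs p'
      constructor
      · obtain ⟨c, hc⟩ := hUleft s hs i p' (z i)
        rw [← mul_assoc, hc, Finset.sum_mul]
        simp_rw [smul_mul_assoc]
        exact Submodule.sum_smul_mem _ _ (fun r _ => Submodule.subset_span ⟨r, rfl⟩)
      · rw [mul_assoc, hxs s hs, mul_zero]
        exact Submodule.zero_mem _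
    · refine ⟨U i (z i) (z i), hUS i (z i) (z i), z i, Or.inl ?_⟩
      show U i (z i) (z i) * (U i (z i) (z i) * x) ≠ 0
      rw [← mul_assoc, hUmul, if_pos rfl, hx1]
      exact hx0
    · intro p'
      refine ⟨LinearMap.mulLeft F (U i (z i) p'), fun W' hbi w hw =>
        (hbi _ (hUS i (z i) p') w hw).1, fun j => ?_⟩
      show U i (z i) p' * (U i j (z i) * x) = _
      rw [← mul_assoc, hUmul]
      by_cases h : p' = j
      · rw [if_pos h, if_pos h.symm, hx1]
      · rw [if_neg h, if_neg (Ne.symm h), zero_mul]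
    · intro W' hbi hxW' p'
      exact (hbi _ (hUS i p' (z i)) x hxW').1
  -- Type R simple bimodules
  have typeR : ∀ (j : Fin m) (x : A), x * U j (z j) (z j) = x → e * x = 0 →
      ∀ q, x * U j (z j) q ∈ M := by
    intro j x hx1 hxe q
    by_cases hx0 : x = 0
    · rw [hx0, zero_mul]
      exact zero_mem M
    haveI : Nonempty (Fin (n j)) := ⟨z j⟩
    have hsx : ∀ a ∈ S, a * x = 0 := by
      intro a ha
      calc a * x = (a * e) * x := by rw [her a ha]
        _ = a * (e * x) := mul_assoc a e x
        _ = 0 := by rw [hxe, mul_zero]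
    have hW := simpleBimod_of_family F S (fun q => x * U j (z j) q) x hx0 ?_ ?_ ?_ ?_
    · exact memM_of_simple _ hW (x * U j (z j) q) (Submodule.subset_span ⟨q, rfl⟩)
    · intro s hs q'
      constructor
      · rw [← mul_assoc, hsx s hs, zero_mul]
        exact Submodule.zero_mem _
      · obtain ⟨c, hc⟩ := hUright s hs j (z j) q'
        rw [mul_assoc, hc, Finset.mul_sum]
        simp_rw [mul_smul_comm]
        exact Submodule.sum_smul_mem _ _ (fun r _ => Submodule.subset_span ⟨r, rfl⟩)
    · refine ⟨U j (z j) (z j), hUS j (z j) (z j), z j, Or.inr ?_⟩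
      show (x * U j (z j) (z j)) * U j (z j) (z j) ≠ 0
      rw [mul_assoc, hUmul, if_pos rfl, hx1]
      exact hx0
    · intro q'
      refine ⟨LinearMap.mulRight F (U j q' (z j)), fun W' hbi w hw =>
        (hbi _ (hUS j q' (z j)) w hw).2, fun jj => ?_⟩
      show (x * U j (z j) jj) * U j q' (z j) = _
      rw [mul_assoc, hUmul]
      by_cases h : jj = q'
      · rw [if_pos h, if_pos h, hx1]
      · rw [if_neg h, if_neg h, mul_zero]
    · intro W' hbi hxW' q'
      exact (hbi _ (hUS j (z j) q') x hxW').2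
  -- Type LR simple bimodules
  have typeLR : ∀ (i j : Fin m) (x : A), U i (z i) (z i) * x = x →
      x * U j (z j) (z j) = x → ∀ p q, U i p (z i) * x * U j (z j) q ∈ M := by
    intro i j x hx1 hx2 p q
    by_cases hx0 : x = 0
    · rw [hx0, mul_zero, zero_mul]
      exact zero_mem M
    haveI : Nonempty (Fin (n i) × Fin (n j)) := ⟨(z i, z j)⟩
    have hW := simpleBimod_of_family F S
      (fun pq : Fin (n i) × Fin (n j) => U i pq.1 (z i) * x * U j (z j) pq.2) x hx0 ?_ ?_ ?_ ?_
    · exact memM_of_simple _ hW (U i p (z i) * x * U j (z j) q)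
        (Submodule.subset_span ⟨(p, q), rfl⟩)
    · rintro s hs ⟨p', q'⟩
      constructor
      · obtain ⟨c, hc⟩ := hUleft s hs i p' (z i)
        have : s * (U i p' (z i) * x * U j (z j) q') =
            ((s * U i p' (z i)) * x) * U j (z j) q' := by noncomm_ring
        rw [this, hc, Finset.sum_mul, Finset.sum_mul]
        simp_rw [smul_mul_assoc]
        exact Submodule.sum_smul_mem _ _ (fun r _ => Submodule.subset_span ⟨(r, q'), rfl⟩)
      · obtain ⟨c, hc⟩ := hUright s hs j (z j) q'
        have : (U i p' (z i) * x * U j (z j) q') * s =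
            (U i p' (z i) * x) * (U j (z j) q' * s) := by noncomm_ring
        rw [this, hc, Finset.mul_sum]
        simp_rw [mul_smul_comm]
        exact Submodule.sum_smul_mem _ _ (fun r _ => Submodule.subset_span ⟨(p', r), rfl⟩)
    · refine ⟨U i (z i) (z i), hUS i (z i) (z i), (z i, z j), Or.inl ?_⟩
      show U i (z i) (z i) * (U i (z i) (z i) * x * U j (z j) (z j)) ≠ 0
      rw [hx1, hx2, hx1]
      exact hx0
    · rintro ⟨p', q'⟩
      refine ⟨(LinearMap.mulRight F (U j q' (z j))).comp (LinearMap.mulLeft F (U i (z i) p')),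
        fun W' hbi w hw => (hbi _ (hUS j q' (z j)) _ ((hbi _ (hUS i (z i) p') w hw).1)).2,
        ?_⟩
      rintro ⟨p'', q''⟩
      show U i (z i) p' * (U i p'' (z i) * x * U j (z j) q'') * U j q' (z j) = _
      have hrearr : U i (z i) p' * (U i p'' (z i) * x * U j (z j) q'') * U j q' (z j) =
          ((U i (z i) p' * U i p'' (z i)) * x) * (U j (z j) q'' * U j q' (z j)) := by
        noncomm_ring
      rw [hrearr, hUmul, hUmul]
      by_cases h1 : p' = p''
      · by_cases h2 : q'' = q'
        · rw [if_pos h1, if_pos h2, hx1, hx2,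
            if_pos (show (p'', q'') = (p', q') by rw [h1, h2])]
        · rw [if_neg h2, mul_zero,
            if_neg (fun hcon => h2 (congrArg Prod.snd hcon))]
      · rw [if_neg h1, zero_mul, zero_mul,
          if_neg (fun hcon => h1 ((congrArg Prod.fst hcon).symm))]
    · rintro W' hbi hxW' ⟨p', q'⟩
      exact (hbi _ (hUS j (z j) q') _ (hbi _ (hUS i p' (z i)) x hxW').1).2
  -- Step 1: e*a and a*e always lie in M
  have hMea : ∀ a : A, e * a ∈ M := by
    intro a
    rw [hesum, Finset.sum_mul]
    refine sum_mem fun i _ => ?_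
    rw [Finset.sum_mul]
    refine sum_mem fun p _ => ?_
    have hsplit : U i p p * a = U i p (z i) * (U i (z i) p * a) := by
      rw [← mul_assoc, hUmul, if_pos rfl]
    set y : A := U i (z i) p * a with hy
    have hy1 : U i (z i) (z i) * y = y := by
      rw [hy, ← mul_assoc, hUmul, if_pos rfl]
    rw [hsplit]
    have hdecomp : U i p (z i) * y =
        U i p (z i) * (y - y * e) + U i p (z i) * (y * e) := by noncomm_ring
    rw [hdecomp]
    refine add_mem ?_ ?_
    · refine typeL i (y - y * e) ?_ ?_ p
      · rw [mul_sub, hy1, ← mul_assoc, hy1]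
      · exact hkillR y
    · have h1 : y * e = ∑ jj, ∑ q, y * U jj q q := by
        rw [hesum, Finset.mul_sum]
        simp_rw [Finset.mul_sum]
      have hB : U i p (z i) * (y * e) = ∑ jj, ∑ q, U i p (z i) * (y * U jj q q) := by
        rw [h1, Finset.mul_sum]
        simp_rw [Finset.mul_sum]
      rw [hB]
      refine sum_mem fun jj _ => sum_mem fun q _ => ?_
      have hQ : U jj q (z jj) * U jj (z jj) q = U jj q q := by rw [hUmul, if_pos rfl]
      have heq : U i p (z i) * (y * U jj q q) =
          U i p (z i) * (y * U jj q (z jj)) * U jj (z jj) q := by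
        rw [← hQ]
        noncomm_ring
      rw [heq]
      refine typeLR i jj (y * U jj q (z jj)) ?_ ?_ p q
      · rw [← mul_assoc, hy1]
      · rw [mul_assoc, hUmul, if_pos rfl]
  have hMae : ∀ a : A, a * e ∈ M := by
    intro a
    rw [hesum, Finset.mul_sum]
    refine sum_mem fun j _ => ?_
    rw [Finset.mul_sum]
    refine sum_mem fun q _ => ?_
    set t : A := a * U j q (z j) with ht
    have ht2 : t * U j (z j) (z j) = t := by
      rw [ht, mul_assoc, hUmul, if_pos rfl]
    have hQ : U j q (z j) * U j (z j) q = U j q q := by rw [hUmul, if_pos rfl]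
    have hsplit : a * U j q q = t * U j (z j) q := by
      rw [← hQ, ← mul_assoc, ← ht]
    rw [hsplit]
    have hdecomp : t * U j (z j) q =
        (t - e * t) * U j (z j) q + (e * t) * U j (z j) q := by noncomm_ring
    rw [hdecomp]
    refine add_mem ?_ ?_
    · refine typeR j (t - e * t) ?_ ?_ q
      · rw [sub_mul, ht2, mul_assoc, ht2]
      · exact hkillL t
    · have h1 : e * t = ∑ i, ∑ p, U i p p * t := by
        rw [hesum, Finset.sum_mul]
        simp_rw [Finset.sum_mul]
      rw [h1, Finset.sum_mul]
      refine sum_mem fun i _ => ?_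
      rw [Finset.sum_mul]
      refine sum_mem fun p _ => ?_
      set x : A := U i (z i) p * t with hx
      have hx1 : U i (z i) (z i) * x = x := by rw [hx, ← mul_assoc, hUmul, if_pos rfl]
      have hx2 : x * U j (z j) (z j) = x := by rw [hx, mul_assoc, ht2]
      have hP : U i p (z i) * U i (z i) p = U i p p := by rw [hUmul, if_pos rfl]
      have heq : (U i p p * t) * U j (z j) q = U i p (z i) * x * U j (z j) q := by
        rw [hx, ← hP]
        noncomm_ring
      rw [heq]
      exact typeLR i j x hx1 hx2 p q
  -- Step 2: generators of M satisfy t = e*t + t*e - e*(t*e), hence M is an ideal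
  have hkill2 : ∀ w : A, e * w = 0 → w * e = 0 → ∀ s ∈ S, s * w = 0 ∧ w * s = 0 := by
    intro w hwl hwr s hs
    constructor
    · calc s * w = (s * e) * w := by rw [her s hs]
        _ = s * (e * w) := mul_assoc s e w
        _ = 0 := by rw [hwl, mul_zero]
    · calc w * s = w * (e * s) := by rw [hel s hs]
        _ = (w * e) * s := (mul_assoc w e s).symm
        _ = 0 := by rw [hwr, zero_mul]
  have hW00 : ∀ W ∈ SimpleBimods F S (Set.univ : Set A), ∀ t ∈ W,
      t = e * t + t * e - e * (t * e) := by
    intro W hWmem t htW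
    obtain ⟨-, -, hbi, hnt, hsimp⟩ := hWmem
    set W0 : Submodule F A := (W ⊓ LinearMap.ker (LinearMap.mulLeft F e)) ⊓
      LinearMap.ker (LinearMap.mulRight F e) with hW0
    have hW0mem : ∀ w, w ∈ W0 ↔ w ∈ W ∧ e * w = 0 ∧ w * e = 0 := by
      intro w
      simp [hW0, Submodule.mem_inf, LinearMap.mem_ker, LinearMap.mulLeft_apply,
        LinearMap.mulRight_apply, and_assoc]
    have hbi0 : IsSubBimod F S W0 := by
      intro s hs w hw
      obtain ⟨hwW, hwl, hwr⟩ := (hW0mem w).1 hw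
      obtain ⟨hsw, hws⟩ := hkill2 w hwl hwr s hs
      rw [hsw, hws]
      exact ⟨W0.zero_mem, W0.zero_mem⟩
    have hW0le : W0 ≤ W := le_trans inf_le_left inf_le_left
    rcases hsimp W0 hW0le hbi0 with h0 | h0
    · have hq : t - (e * t + t * e - e * (t * e)) ∈ W0 := by
        rw [hW0mem]
        refine ⟨?_, ?_, ?_⟩
        · have h1 : e * t ∈ W := (hbi e heS t htW).1
          have h2 : t * e ∈ W := (hbi e heS t htW).2
          have h3 : e * (t * e) ∈ W := (hbi e heS _ h2).1
          exact W.sub_mem htW (W.sub_mem (W.add_mem h1 h2) h3)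
        · have hexp : e * (t - (e * t + t * e - e * (t * e))) =
              e * t - (e * (e * t) + e * (t * e) - e * (e * (t * e))) := by noncomm_ring
          rw [hexp, ← mul_assoc e e t, hee, ← mul_assoc e e (t * e), hee]
          abel
        · have hexp : (t - (e * t + t * e - e * (t * e))) * e =
              t * e - ((e * t) * e + (t * e) * e - (e * (t * e)) * e) := by noncomm_ring
          rw [hexp, mul_assoc e t e, mul_assoc e (t * e) e, mul_assoc t e e, hee]
          abel
      rw [h0, Submodule.mem_bot] at hq
      exact (sub_eq_zero.1 hq)
    · exfalso
      obtain ⟨s, hs, w, hwW, hor⟩ := hnt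
      have hw0 : w ∈ W0 := h0 ▸ hwW
      obtain ⟨-, hwl, hwr⟩ := (hW0mem w).1 hw0
      obtain ⟨hsw, hws⟩ := hkill2 w hwl hwr s hs
      rcases hor with h | h
      · exact h hsw
      · exact h hws
  have hMideal : ∀ x : A, ∀ w ∈ M, x * w ∈ M ∧ w * x ∈ M := by
    intro x w hw
    induction hw using NonUnitalAlgebra.adjoin_induction with
    | mem t ht =>
      obtain ⟨W, hWs, htW⟩ := Set.mem_iUnion₂.1 ht
      have ht00 := hW00 W hWs t htW
      have hetM : e * t ∈ M := memM_of_simple W hWs _ ((hWs.2.2.1) e heS t htW).1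
      have hteM : t * e ∈ M := memM_of_simple W hWs _ ((hWs.2.2.1) e heS t htW).2
      constructor
      · have hA1 : x * (e * t) ∈ M := by
          have het' : e * t = e * (e * t) := by rw [← mul_assoc, hee]
          have h' : x * (e * t) = (x * e) * (e * t) := by
            conv_lhs => rw [het']
            rw [← mul_assoc]
          rw [h']
          exact mul_mem (hMae x) hetM
        have hxt : x * t = x * (e * t) + (x * t) * e - (x * (e * t)) * e := by
          conv_lhs => rw [ht00]
          noncomm_ring
        rw [hxt]
        exact sub_mem (add_mem hA1 (hMae (x * t))) (hMae (x * (e * t)))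
      · have hB2 : (t * e) * x ∈ M := by
          have htee : (t * e) * e = t * e := by rw [mul_assoc, hee]
          have h' : (t * e) * x = (t * e) * (e * x) := by
            conv_lhs => rw [← htee]
            rw [mul_assoc]
          rw [h']
          exact mul_mem hteM (hMea x)
        have hC1 : (e * t) * x ∈ M := by
          rw [mul_assoc]
          exact hMea _
        have hC3 : (e * (t * e)) * x ∈ M := by
          rw [mul_assoc]
          exact hMea _
        have htx : t * x = (e * t) * x + (t * e) * x - (e * (t * e)) * x := by
          conv_lhs => rw [ht00]
          noncomm_ring
        rw [htx]
        exact sub_mem (add_mem hC1 hB2) hC3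
    | add w1 w2 hw1 hw2 ih1 ih2 =>
      exact ⟨by rw [mul_add]; exact add_mem ih1.1 ih2.1,
        by rw [add_mul]; exact add_mem ih1.2 ih2.2⟩
    | zero => simp only [mul_zero, zero_mul]; exact ⟨zero_mem M, zero_mem M⟩
    | mul w1 w2 hw1 hw2 ih1 ih2 =>
      constructor
      · rw [← mul_assoc]
        exact mul_mem ih1.1 hw2
      · rw [mul_assoc]
        exact mul_mem hw1 ih2.2
    | smul r w1 hw1 ih =>
      exact ⟨by rw [mul_smul_comm]; exact SMulMemClass.smul_mem r ih.1,
        by rw [smul_mul_assoc]; exact SMulMemClass.smul_mem r ih.2⟩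
  -- Step 3: P := {a | e*a = 0 ∧ a*e = 0} is contained in the radical
  set P : Submodule F A := LinearMap.ker (LinearMap.mulLeft F e) ⊓
    LinearMap.ker (LinearMap.mulRight F e) with hPdef
  have hPmem : ∀ w : A, w ∈ P ↔ e * w = 0 ∧ w * e = 0 := by
    intro w
    simp [hPdef, Submodule.mem_inf, LinearMap.mem_ker, LinearMap.mulLeft_apply,
      LinearMap.mulRight_apply]
  have hPrad : P ≤ radSub F (A := A) := by
    intro p hp
    obtain ⟨hep, hpe⟩ := (hPmem p).1 hp
    have hptop : p ∈ (NonUnitalSubalgebra.toSubmodule S) ⊔ radSub F (A := A) := by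
      rw [hLevi.codisjoint.eq_top]
      trivial
    obtain ⟨s, hsS, r, hr, hsum⟩ := Submodule.mem_sup.1 hptop
    have h1 : e * s + e * r = 0 := by
      rw [← mul_add, hsum, hep]
    rw [hel s hsS] at h1
    have hseq : s = -(e * r) := eq_neg_of_add_eq_zero_left h1
    have hs0 : s = 0 := by
      refine (Submodule.disjoint_def.1 hLevi.disjoint) s hsS ?_
      rw [hseq]
      exact Submodule.neg_mem _ (radSub_ideal F e r hr).1
    rw [← hsum, hs0, zero_add]
    exact hr
  have hPP : ∀ p q : A, p ∈ P → q ∈ P → p * q ∈ P := by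
    intro p q hp hq
    obtain ⟨hep, hpe⟩ := (hPmem p).1 hp
    obtain ⟨heq, hqe⟩ := (hPmem q).1 hq
    rw [hPmem]
    constructor
    · rw [← mul_assoc, hep, zero_mul]
    · rw [mul_assoc, hqe, mul_zero]
  -- Step 4: products decompose into M plus P·P
  have hsup : ∀ x y : A, x * y ∈ NonUnitalSubalgebra.toSubmodule M ⊔ subPow F P 1 := by
    intro x y
    have hid : x * y =
        (((x * (e * y) + (e * x) * (y - e * y)) + (x - e * x) * ((y - e * y) * e)) +
        ((x - e * x) * e) * ((y - e * y) - (y - e * y) * e)) +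
        ((x - e * x) - (x - e * x) * e) * ((y - e * y) - (y - e * y) * e) := by
      noncomm_ring
    have hw''P : (x - e * x) - (x - e * x) * e ∈ P := by
      rw [hPmem]
      constructor
      · rw [mul_sub, ← mul_assoc e (x - e * x) e, hkillL x, zero_mul, sub_zero]
      · exact hkillR (x - e * x)
    have hz'P : (y - e * y) - (y - e * y) * e ∈ P := by
      rw [hPmem]
      constructor
      · rw [mul_sub, ← mul_assoc e (y - e * y) e, hkillL y, zero_mul, sub_zero]
      · exact hkillR (y - e * y)
    refine Submodule.mem_sup.2 ⟨_, ?_, _, Submodule.subset_span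
      ⟨_, hw''P, _, hz'P, rfl⟩, hid.symm⟩
    rw [NonUnitalSubalgebra.mem_toSubmodule]
    refine add_mem (add_mem (add_mem ?_ ?_) ?_) ?_
    · exact (hMideal x (e * y) (hMea y)).1
    · exact (hMideal (y - e * y) (e * x) (hMea x)).2
    · rw [← mul_assoc]
      exact hMae _
    · exact (hMideal ((y - e * y) - (y - e * y) * e) ((x - e * x) * e) (hMae _)).2
  have hTop : (⊤ : Submodule F A) ≤ NonUnitalSubalgebra.toSubmodule M ⊔ subPow F P 1 := by
    rw [← hA_perf]
    refine Submodule.span_le.2 ?_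
    rintro t ⟨a, b, rfl⟩
    exact hsup a b
  have hstep : ∀ k, subPow F P k ≤
      NonUnitalSubalgebra.toSubmodule M ⊔ subPow F P (k + 1) := by
    intro k
    induction k with
    | zero => exact le_trans le_top hTop
    | succ k ih =>
      refine Submodule.span_le.2 ?_
      rintro t ⟨a, ha, b, hb, rfl⟩
      obtain ⟨mm, hmm, cc, hcc, hsum⟩ := Submodule.mem_sup.1 (ih ha)
      rw [← hsum, add_mul]
      refine Submodule.add_mem _ (Submodule.mem_sup_left ?_) (Submodule.mem_sup_right ?_)
      · rw [NonUnitalSubalgebra.mem_toSubmodule] at hmm ⊢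
        exact (hMideal b mm hmm).2
      · exact mem_subPow_succ F hcc hb
  have hP1 : subPow F P 1 ≤ P := by
    refine Submodule.span_le.2 ?_
    rintro t ⟨a, ha, b, hb, rfl⟩
    exact hPP a b ha hb
  have hchain : ∀ k, (⊤ : Submodule F A) ≤
      NonUnitalSubalgebra.toSubmodule M ⊔ subPow F P k := by
    intro k
    induction k with
    | zero => exact hTop.trans (sup_le_sup_left hP1 _)
    | succ k ih => exact ih.trans (sup_le le_sup_left (hstep k))
  obtain ⟨K, hK⟩ := radSub_nilpotent F (A := A)
  have hfinal : (⊤ : Submodule F A) ≤ NonUnitalSubalgebra.toSubmodule M := by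
    refine (hchain K).trans (sup_le le_rfl ?_)
    have h2 := subPow_mono F hPrad K
    rw [hK] at h2
    exact h2.trans bot_le
  refine NonUnitalAlgebra.eq_top_iff.2 fun x => ?_
  have := hfinal (Submodule.mem_top (x := x))
  rwa [NonUnitalSubalgebra.mem_toSubmodule] at this
end

section
/- In the matrix-decomposition setting below, the Lie algebra L is perfect: [L, L] = L. -/
/-! Statement 11: in the matrix-decomposition setting, the Lie algebra `L` is perfect. -/

open scoped TensorProduct DirectSum

universe u v w

/-- `n` extended to `Î = I ∪ {0}` (`none` playing the role of `0`), with `n_0 = 1`. -/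
abbrev nopt {I : Type} (n : I → ℕ) : Option I → ℕ
  | none => 1
  | some i => n i

variable (F : Type u) [Field F] [IsAlgClosed F]
  {I : Type} [Fintype I] [DecidableEq I] [Nonempty I] {n : I → ℕ}
  {Λ : Option I → Option I → Type v}
  [∀ i j, AddCommGroup (Λ i j)] [∀ i j, Module F (Λ i j)]
  {A : Type w} [NonUnitalRing A] [Module F A] [SMulCommClass F A A] [IsScalarTower F A A]

/-- The image in `A` of an element `u ∈ V_ij ⊗ Λ(i,j)` under the identification `ψ`
of `A` with `⊕_{i,j ∈ Î} V_ij ⊗ Λ(i,j)`. -/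
noncomputable def emb (ψ : (⨁ p : Option I × Option I,
      Matrix (Fin (nopt n p.1)) (Fin (nopt n p.2)) F ⊗[F] Λ p.1 p.2) ≃ₗ[F] A)
    (p : Option I × Option I)
    (u : Matrix (Fin (nopt n p.1)) (Fin (nopt n p.2)) F ⊗[F] Λ p.1 p.2) : A :=
  ψ (DirectSum.lof F (Option I × Option I)
    (fun q => Matrix (Fin (nopt n q.1)) (Fin (nopt n q.2)) F ⊗[F] Λ q.1 q.2) p u)

/-- The image in `A` of a pure tensor `X ⊗ a ∈ V_ij ⊗ Λ(i,j)`. -/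
noncomputable def elt (ψ : (⨁ p : Option I × Option I,
      Matrix (Fin (nopt n p.1)) (Fin (nopt n p.2)) F ⊗[F] Λ p.1 p.2) ≃ₗ[F] A)
    (i j : Option I) (X : Matrix (Fin (nopt n i)) (Fin (nopt n j)) F) (a : Λ i j) : A :=
  emb F ψ (i, j) (X ⊗ₜ a)

/-- The union of the subspaces `V'_ij ⊗ Λ(i,j)`, `(i,j) ≠ (0,0)`, where `V'_ii` consists
of the trace-zero matrices and `V'_ij = V_ij` for `i ≠ j`. -/
def lieGens (ψ : (⨁ p : Option I × Option I,
      Matrix (Fin (nopt n p.1)) (Fin (nopt n p.2)) F ⊗[F] Λ p.1 p.2) ≃ₗ[F] A) : Set A :=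
  {x | ∃ (i j : Option I) (X : Matrix (Fin (nopt n i)) (Fin (nopt n j)) F) (a : Λ i j),
      i ≠ j ∧ x = elt F ψ i j X a} ∪
  {x | ∃ (i : I) (X : Matrix (Fin (n i)) (Fin (n i)) F) (a : Λ (some i) (some i)),
      Matrix.trace X = 0 ∧ x = elt F ψ (some i) (some i) X a}

/-- `L`: the Lie subalgebra of `A` (as a subspace closed under commutators) generated by
the subspaces `V'_ij ⊗ Λ(i,j)` over all `(i,j) ≠ (0,0)`. -/
def Lsub (ψ : (⨁ p : Option I × Option I,
      Matrix (Fin (nopt n p.1)) (Fin (nopt n p.2)) F ⊗[F] Λ p.1 p.2) ≃ₗ[F] A) :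
    Submodule F A :=
  sInf {J : Submodule F A | lieGens F ψ ⊆ J ∧ ∀ x ∈ J, ∀ y ∈ J, x * y - y * x ∈ J}

theorem sbm_mul {l m o : Type*} {F : Type*} [Field F] [Fintype m] [DecidableEq l] [DecidableEq m] [DecidableEq o]
    (i : l) (j : m) (k : o) (c d : F) :
    Matrix.single i j c * Matrix.single j k d = Matrix.single i k (c * d) := by
  ext a b
  simp only [Matrix.mul_apply, Matrix.single, Matrix.of_apply, ite_and]
  rw [Finset.sum_eq_single j]
  · split_ifs <;> simp_all
  · intro x _ hx; simp [Ne.symm hx]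
  · simp
theorem sbm_mul_ne {l m o : Type*} {F : Type*} [Field F] [Fintype m] [DecidableEq l] [DecidableEq m] [DecidableEq o]
    (i : l) (j j' : m) (k : o) (h : j ≠ j') (c d : F) :
    Matrix.single i j c * Matrix.single j' k d = 0 := by
  ext a b
  simp only [Matrix.mul_apply, Matrix.single, Matrix.of_apply, ite_and, Matrix.zero_apply]
  refine Finset.sum_eq_zero fun x _ => ?_
  split_ifs <;> simp_all

/-- `elt F ψ i j X a`, bundled as a linear map in `X`. -/
noncomputable def eltMap (ψ : (⨁ p : Option I × Option I,
      Matrix (Fin (nopt n p.1)) (Fin (nopt n p.2)) F ⊗[F] Λ p.1 p.2) ≃ₗ[F] A)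
    (i j : Option I) (a : Λ i j) :
    Matrix (Fin (nopt n i)) (Fin (nopt n j)) F →ₗ[F] A :=
  ((ψ.toLinearMap.comp (DirectSum.lof F (Option I × Option I)
    (fun q => Matrix (Fin (nopt n q.1)) (Fin (nopt n q.2)) F ⊗[F] Λ q.1 q.2) (i, j))).comp
    ((TensorProduct.mk F (Matrix (Fin (nopt n i)) (Fin (nopt n j)) F) (Λ i j)).flip a))

lemma eltMap_apply (ψ : (⨁ p : Option I × Option I,
      Matrix (Fin (nopt n p.1)) (Fin (nopt n p.2)) F ⊗[F] Λ p.1 p.2) ≃ₗ[F] A)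
    (i j : Option I) (X : Matrix (Fin (nopt n i)) (Fin (nopt n j)) F) (a : Λ i j) :
    eltMap F ψ i j a X = elt F ψ i j X a := rfl

variable (mu : ∀ i j k : Option I, Λ i j →ₗ[F] Λ j k →ₗ[F] Λ i k)
  (ψ : (⨁ p : Option I × Option I,
      Matrix (Fin (nopt n p.1)) (Fin (nopt n p.2)) F ⊗[F] Λ p.1 p.2) ≃ₗ[F] A)

theorem Lsub_perfect
    -- sizes: `n_i ≥ 2`, and `n_i ≥ 3` in characteristic 2
    (hn2 : ∀ i : I, 2 ≤ n i) (hn3 : ringChar F = 2 → ∀ i : I, 3 ≤ n i)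
    -- `Λ` is an associative algebra with componentwise products `Λ(i,j)Λ(j,k) ⊆ Λ(i,k)`
    (hassoc : ∀ (i j k l : Option I) (a : Λ i j) (b : Λ j k) (c : Λ k l),
      mu i k l (mu i j k a b) c = mu i j l a (mu j k l b c))
    -- each `Λ(i,i)`, `i ∈ I`, has an identity element `1_i`
    (one : ∀ i : I, Λ (some i) (some i))
    (hone_left : ∀ (i : I) (j : Option I) (a : Λ (some i) j),
      mu (some i) (some i) j (one i) a = a)
    (hone_right : ∀ (i : I) (j : Option I) (a : Λ j (some i)),
      mu j (some i) (some i) a (one i) = a)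
    -- `Λ(0,0) = Σ_{i ∈ I} Λ(0,i)Λ(i,0)`
    (h00 : ∀ x : Λ none none, x ∈ Submodule.span F
      {y : Λ none none | ∃ (i : I) (a : Λ none (some i)) (b : Λ (some i) none),
        y = mu none (some i) none a b})
    -- the product of `A`: `(X ⊗ λ)(Y ⊗ μ) = XY ⊗ λμ` for matching inner indices …
    (hmul : ∀ (i j k : Option I) (X : Matrix (Fin (nopt n i)) (Fin (nopt n j)) F)
      (a : Λ i j) (Y : Matrix (Fin (nopt n j)) (Fin (nopt n k)) F) (b : Λ j k),
      elt F ψ i j X a * elt F ψ j k Y b = elt F ψ i k (X * Y) (mu i j k a b))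
    -- … and `0` otherwise
    (hmul0 : ∀ (i j s t : Option I), j ≠ s →
      ∀ (X : Matrix (Fin (nopt n i)) (Fin (nopt n j)) F) (a : Λ i j)
        (Y : Matrix (Fin (nopt n s)) (Fin (nopt n t)) F) (b : Λ s t),
      elt F ψ i j X a * elt F ψ s t Y b = 0)
    :
    Submodule.span F
        {z : A | ∃ x ∈ Lsub F ψ, ∃ y ∈ Lsub F ψ, z = x * y - y * x}
      = Lsub F ψ := by
  classical
  set L := Lsub F ψ with hLdef
  have hGL : lieGens F ψ ⊆ (L : Set A) := fun x hx =>
    Submodule.mem_sInf.2 fun J hJ => hJ.1 hx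
  have hLcl : ∀ x ∈ L, ∀ y ∈ L, x * y - y * x ∈ L := fun x hx y hy =>
    Submodule.mem_sInf.2 fun J hJ =>
      hJ.2 x (Submodule.mem_sInf.1 hx J hJ) y (Submodule.mem_sInf.1 hy J hJ)
  set D := Submodule.span F {z : A | ∃ x ∈ L, ∃ y ∈ L, z = x * y - y * x} with hDdef
  have hDL : D ≤ L := Submodule.span_le.2 (by
    rintro z ⟨x, hx, y, hy, rfl⟩; exact hLcl x hx y hy)
  have hbr : ∀ x ∈ L, ∀ y ∈ L, x * y - y * x ∈ D := fun x hx y hy =>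
    Submodule.subset_span ⟨x, hx, y, hy, rfl⟩
  -- membership of generators in `L`
  have memL1 : ∀ (i j : Option I), i ≠ j →
      ∀ (X : Matrix (Fin (nopt n i)) (Fin (nopt n j)) F) (a : Λ i j),
      elt F ψ i j X a ∈ L := fun i j h X a => hGL (Or.inl ⟨i, j, X, a, h, rfl⟩)
  have memL2 : ∀ (i : I) (X : Matrix (Fin (n i)) (Fin (n i)) F) (a : Λ (some i) (some i)),
      Matrix.trace X = 0 → elt F ψ (some i) (some i) X a ∈ L :=
    fun i X a h => hGL (Or.inr ⟨i, X, a, h, rfl⟩)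
  -- linearity of `elt` in the matrix argument
  have hEsub : ∀ (i j : Option I) (X Y : Matrix (Fin (nopt n i)) (Fin (nopt n j)) F)
      (a : Λ i j), elt F ψ i j (X - Y) a = elt F ψ i j X a - elt F ψ i j Y a := by
    intro i j X Y a
    rw [← eltMap_apply, ← eltMap_apply, ← eltMap_apply, map_sub]
  have hEzero : ∀ (i j : Option I) (a : Λ i j), elt F ψ i j 0 a = 0 := by
    intro i j a; rw [← eltMap_apply, map_zero]
  -- off-diagonal generators are in `D`
  have hD_off : ∀ (i j : Option I), i ≠ j →
      ∀ (X : Matrix (Fin (nopt n i)) (Fin (nopt n j)) F) (a : Λ i j),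
      elt F ψ i j X a ∈ D := by
    intro i j hij X a
    have hsum : elt F ψ i j X a
        = ∑ p, ∑ q, eltMap F ψ i j a (Matrix.single p q (X p q)) := by
      rw [← eltMap_apply]
      conv_lhs => rw [Matrix.matrix_eq_sum_single X]
      simp only [map_sum]
    rw [hsum]
    refine Submodule.sum_mem _ fun p _ => Submodule.sum_mem _ fun q _ => ?_
    rw [eltMap_apply]
    rcases j with _ | j₀
    · -- j = 0, so i = some i₀
      rcases i with _ | i₀
      · exact absurd rfl hij
      haveI : Nontrivial (Fin (n i₀)) := Fin.nontrivial_iff_two_le.2 (hn2 i₀)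
      obtain ⟨k, hk⟩ := exists_ne p
      have h1 : elt F ψ (some i₀) (some i₀) (Matrix.single p k 1) (one i₀) ∈ L :=
        memL2 i₀ _ _ (Matrix.trace_single_eq_of_ne p k (1 : F) hk.symm)
      have h2 : elt F ψ (some i₀) none (Matrix.single k q (X p q)) a ∈ L :=
        memL1 (some i₀) none (by simp) _ _
      have hb := hbr _ h1 _ h2
      rw [hmul, hmul0 (some i₀) none (some i₀) (some i₀) (by simp), sub_zero,
        sbm_mul, one_mul, hone_left] at hb
      exact hb
    · -- j = some j₀
      haveI : Nontrivial (Fin (n j₀)) := Fin.nontrivial_iff_two_le.2 (hn2 j₀)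
      obtain ⟨k, hk⟩ := exists_ne q
      have h1 : elt F ψ i (some j₀) (Matrix.single p k (X p q)) a ∈ L :=
        memL1 i (some j₀) hij _ _
      have h2 : elt F ψ (some j₀) (some j₀) (Matrix.single k q 1) (one j₀) ∈ L :=
        memL2 j₀ _ _ (Matrix.trace_single_eq_of_ne k q (1 : F) hk)
      have hb := hbr _ h1 _ h2
      rw [hmul, hmul0 (some j₀) (some j₀) i (some j₀) (Ne.symm hij), sub_zero,
        sbm_mul, mul_one, hone_right] at hb
      exact hb
  -- diagonal generators are in `D`
  have hD_diag : ∀ (i : I) (X : Matrix (Fin (n i)) (Fin (n i)) F) (a : Λ (some i) (some i)),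
      Matrix.trace X = 0 → elt F ψ (some i) (some i) X a ∈ D := by
    intro i X a htr
    have hn2i := hn2 i
    set z0 : Fin (n i) := ⟨0, by omega⟩ with hz0
    -- step A: off-diagonal elementary matrices
    have stepA : ∀ (c : F) (k l : Fin (n i)), k ≠ l →
        elt F ψ (some i) (some i) (Matrix.single k l c) a ∈ D := by
      intro c k l hkl
      by_cases hc2 : ringChar F = 2
      · -- char 2: use n i ≥ 3
        have h3 : 3 ≤ n i := hn3 hc2 i
        have hm : ∃ m : Fin (n i), m ≠ k ∧ m ≠ l := by
          have hne : (({k, l} : Finset (Fin (n i)))ᶜ).Nonempty := by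
            rw [← Finset.card_pos, Finset.card_compl, Fintype.card_fin]
            have hcard : ({k, l} : Finset (Fin (n i))).card ≤ 2 :=
              (Finset.card_insert_le k {l}).trans (by simp)
            omega
          obtain ⟨m, hm⟩ := hne
          rw [Finset.mem_compl, Finset.mem_insert, Finset.mem_singleton] at hm
          push_neg at hm
          exact ⟨m, hm.1, hm.2⟩
        obtain ⟨m, hmk, hml⟩ := hm
        have h1 : elt F ψ (some i) (some i) (Matrix.single k m 1) (one i) ∈ L :=
          memL2 i _ _ (Matrix.trace_single_eq_of_ne k m (1 : F) (Ne.symm hmk))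
        have h2 : elt F ψ (some i) (some i) (Matrix.single m l c) a ∈ L :=
          memL2 i _ _ (Matrix.trace_single_eq_of_ne m l c hml)
        have hb := hbr _ h1 _ h2
        rw [hmul, hmul, sbm_mul, one_mul, hone_left,
          sbm_mul_ne _ _ _ _ (Ne.symm hkl), hEzero, sub_zero] at hb
        exact hb
      · -- char ≠ 2
        have two_ne : (2 : F) ≠ 0 := Ring.two_ne_zero hc2
        have h1 : elt F ψ (some i) (some i)
            (Matrix.single k k 1 - Matrix.single l l 1) (one i) ∈ L := by
          refine memL2 i _ _ ?_
          rw [Matrix.trace_sub, Matrix.trace_single_eq_same, Matrix.trace_single_eq_same,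
            sub_self]
        have h2 : elt F ψ (some i) (some i) (Matrix.single k l c) a ∈ L :=
          memL2 i _ _ (Matrix.trace_single_eq_of_ne k l c hkl)
        have hb := hbr _ h1 _ h2
        rw [hmul, hmul, hone_left, hone_right] at hb
        have e1 : (Matrix.single k k (1 : F) - Matrix.single l l 1)
            * Matrix.single k l c = Matrix.single k l c := by
          rw [Matrix.sub_mul, sbm_mul, one_mul,
            sbm_mul_ne _ _ _ _ (Ne.symm hkl), sub_zero]
        have e2 : Matrix.single k l c
            * (Matrix.single k k (1 : F) - Matrix.single l l 1)
            = -(Matrix.single k l c) := by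
          rw [Matrix.mul_sub, sbm_mul, mul_one,
            sbm_mul_ne _ _ _ _ (Ne.symm hkl), zero_sub]
        rw [e1, e2] at hb
        have e3 : elt F ψ (some i) (some i) (-(Matrix.single k l c)) a
            = -elt F ψ (some i) (some i) (Matrix.single k l c) a := by
          rw [← eltMap_apply, ← eltMap_apply, map_neg]
        rw [e3, sub_neg_eq_add] at hb
        have e4 : elt F ψ (some i) (some i) (Matrix.single k l c) a
            + elt F ψ (some i) (some i) (Matrix.single k l c) a
            = (2 : F) • elt F ψ (some i) (some i) (Matrix.single k l c) a :=
          (two_smul F _).symm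
        rw [e4] at hb
        have := D.smul_mem (2 : F)⁻¹ hb
        rwa [smul_smul, inv_mul_cancel₀ two_ne, one_smul] at this
    -- step B: differences of diagonal elementary matrices
    have stepB : ∀ (c : F) (l : Fin (n i)),
        elt F ψ (some i) (some i)
          (Matrix.single l l c - Matrix.single z0 z0 c) a ∈ D := by
      intro c l
      by_cases hl : l = z0
      · subst hl; rw [sub_self, hEzero]; exact D.zero_mem
      · have h1 : elt F ψ (some i) (some i) (Matrix.single l z0 c) (one i) ∈ L :=
          memL2 i _ _ (Matrix.trace_single_eq_of_ne l z0 c hl)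
        have h2 : elt F ψ (some i) (some i) (Matrix.single z0 l 1) a ∈ L :=
          memL2 i _ _ (Matrix.trace_single_eq_of_ne z0 l (1 : F) (Ne.symm hl))
        have hb := hbr _ h1 _ h2
        rw [hmul, hmul, hone_left, hone_right, sbm_mul, mul_one,
          sbm_mul, one_mul, ← hEsub] at hb
        exact hb
    -- decompose `X`
    have htr' : ∑ k, X k k = 0 := htr
    have hXsum : X = ∑ k, ∑ l, (Matrix.single k l (X k l)
        - if k = l then Matrix.single z0 z0 (X k l) else 0) := by
      have h1 : ∀ k : Fin (n i), ∑ l, (Matrix.single k l (X k l)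
          - if k = l then Matrix.single z0 z0 (X k l) else 0)
          = (∑ l, Matrix.single k l (X k l))
            - Matrix.single z0 z0 (X k k) := by
        intro k
        rw [Finset.sum_sub_distrib, Finset.sum_ite_eq]
        simp
      rw [Finset.sum_congr rfl fun k _ => h1 k, Finset.sum_sub_distrib]
      have h2 : ∑ k : Fin (n i), Matrix.single z0 z0 (X k k)
          = Matrix.single z0 z0 (∑ k, X k k) := by
        have h3 : ∀ k : Fin (n i), Matrix.single z0 z0 (X k k)
            = (X k k) • Matrix.single z0 z0 (1 : F) := by
          intro k; rw [Matrix.smul_single, smul_eq_mul, mul_one]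
        rw [Finset.sum_congr rfl fun k _ => h3 k, ← Finset.sum_smul,
          Matrix.smul_single, smul_eq_mul, mul_one]
      rw [h2, htr', ← Matrix.matrix_eq_sum_single]
      simp
    have hsum : elt F ψ (some i) (some i) X a
        = ∑ k, ∑ l, eltMap F ψ (some i) (some i) a (Matrix.single k l (X k l)
            - if k = l then Matrix.single z0 z0 (X k l) else 0) := by
      rw [← eltMap_apply]
      conv_lhs => rw [hXsum]
      simp only [map_sum]
    rw [hsum]
    refine Submodule.sum_mem _ fun k _ => Submodule.sum_mem _ fun l _ => ?_
    rw [eltMap_apply]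
    by_cases hkl : k = l
    · subst hkl
      rw [if_pos rfl]
      exact stepB (X k k) k
    · rw [if_neg hkl, sub_zero]
      exact stepA (X k l) k l hkl
  -- generators are in `D`
  have key : lieGens F ψ ⊆ (D : Set A) := by
    rintro x (⟨i, j, X, a, hij, rfl⟩ | ⟨i, X, a, htr, rfl⟩)
    · exact hD_off i j hij X a
    · exact hD_diag i X a htr
  have hLD : L ≤ D :=
    sInf_le ⟨key, fun x hx y hy => hbr x (hDL hx) y (hDL hy)⟩
  exact le_antisymm hDL hLD
end

section
/- In the matrix-decomposition setting below, for every i ∈ I one has [V_ii ⊗ Λ(i,i), V_ii ⊗ Λ(i,i)] ⊆ L, i.e. the commutator of any two elements of V_ii ⊗ Λ(i,i) lies in L. -/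
/-! Statement 12: in the matrix-decomposition setting, `[V_ii ⊗ Λ(i,i), V_ii ⊗ Λ(i,i)] ⊆ L` for all `i ∈ I`. -/

open scoped TensorProduct DirectSum

universe u v w

variable (F : Type u) [Field F] [IsAlgClosed F]
  {I : Type} [Fintype I] [DecidableEq I] [Nonempty I] {n : I → ℕ}
  {Λ : Option I → Option I → Type v}
  [∀ i j, AddCommGroup (Λ i j)] [∀ i j, Module F (Λ i j)]
  {A : Type w} [NonUnitalRing A] [Module F A] [SMulCommClass F A A] [IsScalarTower F A A]

variable (mu : ∀ i j k : Option I, Λ i j →ₗ[F] Λ j k →ₗ[F] Λ i k)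
  (ψ : (⨁ p : Option I × Option I,
      Matrix (Fin (nopt n p.1)) (Fin (nopt n p.2)) F ⊗[F] Λ p.1 p.2) ≃ₗ[F] A)

section Helpers

variable {F}
variable {ψ' : (⨁ p : Option I × Option I,
      Matrix (Fin (nopt n p.1)) (Fin (nopt n p.2)) F ⊗[F] Λ p.1 p.2) ≃ₗ[F] A}

lemma emb_add (p : Option I × Option I)
    (u v : Matrix (Fin (nopt n p.1)) (Fin (nopt n p.2)) F ⊗[F] Λ p.1 p.2) :
    emb F ψ' p (u + v) = emb F ψ' p u + emb F ψ' p v := by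
  simp [emb, map_add]

lemma emb_zero (p : Option I × Option I) :
    emb F ψ' p (0 : Matrix (Fin (nopt n p.1)) (Fin (nopt n p.2)) F ⊗[F] Λ p.1 p.2) = 0 := by
  simp [emb]

lemma elt_eq_emb (i j : Option I) (X : Matrix (Fin (nopt n i)) (Fin (nopt n j)) F)
    (a : Λ i j) : elt F ψ' i j X a = emb F ψ' (i, j) (X ⊗ₜ a) := rfl

lemma elt_sub_left (i j : Option I) (X Y : Matrix (Fin (nopt n i)) (Fin (nopt n j)) F)
    (a : Λ i j) : elt F ψ' i j (X - Y) a = elt F ψ' i j X a - elt F ψ' i j Y a := by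
  simp [elt, emb, TensorProduct.sub_tmul, map_sub]

lemma elt_sub_right (i j : Option I) (X : Matrix (Fin (nopt n i)) (Fin (nopt n j)) F)
    (a b : Λ i j) : elt F ψ' i j X (a - b) = elt F ψ' i j X a - elt F ψ' i j X b := by
  simp [elt, emb, TensorProduct.tmul_sub, map_sub]

lemma elt_smul_left (i j : Option I) (c : F) (X : Matrix (Fin (nopt n i)) (Fin (nopt n j)) F)
    (a : Λ i j) : elt F ψ' i j (c • X) a = c • elt F ψ' i j X a := by
  unfold elt emb
  rw [← TensorProduct.smul_tmul', map_smul, map_smul]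

lemma lieGens_subset_Lsub : lieGens F ψ' ⊆ (Lsub F ψ' : Set A) := fun x hx => by
  rw [SetLike.mem_coe, Lsub, Submodule.mem_sInf]
  exact fun J hJ => hJ.1 hx

lemma Lsub_bracket {x y : A} (hx : x ∈ Lsub F ψ') (hy : y ∈ Lsub F ψ') :
    x * y - y * x ∈ Lsub F ψ' := by
  rw [Lsub, Submodule.mem_sInf] at *
  exact fun J hJ => hJ.2 x (hx J hJ) y (hy J hJ)

lemma traceless_mem_Lsub (i : I) (X : Matrix (Fin (n i)) (Fin (n i)) F)
    (a : Λ (some i) (some i)) (h : Matrix.trace X = 0) :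
    elt F ψ' (some i) (some i) X a ∈ Lsub F ψ' :=
  lieGens_subset_Lsub (Or.inr ⟨i, X, a, h, rfl⟩)

end Helpers

theorem commutator_Vii_Vii_mem_Lsub
    -- sizes: `n_i ≥ 2`, and `n_i ≥ 3` in characteristic 2
    (hn2 : ∀ i : I, 2 ≤ n i) (hn3 : ringChar F = 2 → ∀ i : I, 3 ≤ n i)
    -- `Λ` is an associative algebra with componentwise products `Λ(i,j)Λ(j,k) ⊆ Λ(i,k)`
    (hassoc : ∀ (i j k l : Option I) (a : Λ i j) (b : Λ j k) (c : Λ k l),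
      mu i k l (mu i j k a b) c = mu i j l a (mu j k l b c))
    -- each `Λ(i,i)`, `i ∈ I`, has an identity element `1_i`
    (one : ∀ i : I, Λ (some i) (some i))
    (hone_left : ∀ (i : I) (j : Option I) (a : Λ (some i) j),
      mu (some i) (some i) j (one i) a = a)
    (hone_right : ∀ (i : I) (j : Option I) (a : Λ j (some i)),
      mu j (some i) (some i) a (one i) = a)
    -- `Λ(0,0) = Σ_{i ∈ I} Λ(0,i)Λ(i,0)`
    (h00 : ∀ x : Λ none none, x ∈ Submodule.span F
      {y : Λ none none | ∃ (i : I) (a : Λ none (some i)) (b : Λ (some i) none),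
        y = mu none (some i) none a b})
    -- the product of `A`: `(X ⊗ λ)(Y ⊗ μ) = XY ⊗ λμ` for matching inner indices …
    (hmul : ∀ (i j k : Option I) (X : Matrix (Fin (nopt n i)) (Fin (nopt n j)) F)
      (a : Λ i j) (Y : Matrix (Fin (nopt n j)) (Fin (nopt n k)) F) (b : Λ j k),
      elt F ψ i j X a * elt F ψ j k Y b = elt F ψ i k (X * Y) (mu i j k a b))
    -- … and `0` otherwise
    (hmul0 : ∀ (i j s t : Option I), j ≠ s →
      ∀ (X : Matrix (Fin (nopt n i)) (Fin (nopt n j)) F) (a : Λ i j)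
        (Y : Matrix (Fin (nopt n s)) (Fin (nopt n t)) F) (b : Λ s t),
      elt F ψ i j X a * elt F ψ s t Y b = 0)
    :
    -- the commutator of any two elements of `V_ii ⊗ Λ(i,i)`, `i ∈ I`, lies in `L`
    ∀ (i : I) (u v : Matrix (Fin (n i)) (Fin (n i)) F ⊗[F] Λ (some i) (some i)),
      emb F ψ (some i, some i) u * emb F ψ (some i, some i) v
        - emb F ψ (some i, some i) v * emb F ψ (some i, some i) u ∈ Lsub F ψ := by
  intro i u v
  -- two distinguished indices in `Fin (n i)`
  have h0 : (0 : ℕ) < n i := lt_of_lt_of_le (by norm_num) (hn2 i)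
  have h1 : (1 : ℕ) < n i := lt_of_lt_of_le (by norm_num) (hn2 i)
  set k0 : Fin (n i) := ⟨0, h0⟩ with hk0
  set k1 : Fin (n i) := ⟨1, h1⟩ with hk1
  have hk01 : k0 ≠ k1 := by simp [hk0, hk1, Fin.ext_iff]
  -- Step 1: `E_{00} ⊗ (ab - ba) ∈ L` for all `a b`.
  have key : ∀ a b : Λ (some i) (some i),
      elt F ψ (some i) (some i) (Matrix.single k0 k0 (1:F))
        (mu (some i) (some i) (some i) a b - mu (some i) (some i) (some i) b a)
        ∈ Lsub F ψ := by
    intro a b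
    have hA : elt F ψ (some i) (some i) (Matrix.single k1 k0 (1:F)) a ∈ Lsub F ψ :=
      traceless_mem_Lsub i _ a (Matrix.trace_single_eq_of_ne _ _ _ hk01.symm)
    have hB : elt F ψ (some i) (some i) (Matrix.single k0 k1 (1:F)) b ∈ Lsub F ψ :=
      traceless_mem_Lsub i _ b (Matrix.trace_single_eq_of_ne _ _ _ hk01)
    have hbr := Lsub_bracket hA hB
    rw [hmul, hmul, Matrix.single_mul_single_same, Matrix.single_mul_single_same,
      one_mul] at hbr
    have hC : elt F ψ (some i) (some i)
        (Matrix.single k1 k1 (1:F) - Matrix.single k0 k0 (1:F))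
        (mu (some i) (some i) (some i) a b) ∈ Lsub F ψ := by
      refine traceless_mem_Lsub i _ _ ?_
      rw [Matrix.trace_sub, Matrix.trace_single_eq_same, Matrix.trace_single_eq_same,
        sub_self]
    have heq : elt F ψ (some i) (some i) (Matrix.single k0 k0 (1:F))
        (mu (some i) (some i) (some i) a b - mu (some i) (some i) (some i) b a)
        = (elt F ψ (some i) (some i) (Matrix.single k1 k1 (1:F))
            (mu (some i) (some i) (some i) a b)
          - elt F ψ (some i) (some i) (Matrix.single k0 k0 (1:F))
            (mu (some i) (some i) (some i) b a))
          - elt F ψ (some i) (some i)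
            (Matrix.single k1 k1 (1:F) - Matrix.single k0 k0 (1:F))
            (mu (some i) (some i) (some i) a b) := by
      rw [elt_sub_right, elt_sub_left]; abel
    rw [heq]
    exact Submodule.sub_mem _ hbr hC
  -- Step 2: the commutator of two pure tensors lies in `L`.
  have key2 : ∀ (X Y : Matrix (Fin (n i)) (Fin (n i)) F) (a b : Λ (some i) (some i)),
      elt F ψ (some i) (some i) X a * elt F ψ (some i) (some i) Y b
        - elt F ψ (some i) (some i) Y b * elt F ψ (some i) (some i) X a ∈ Lsub F ψ := by
    intro X Y a b
    set t : F := Matrix.trace (X * Y) with ht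
    have htY : Matrix.trace (Y * X) = t := (Matrix.trace_mul_comm Y X)
    have hXY : elt F ψ (some i) (some i)
        (X * Y - t • Matrix.single k0 k0 (1:F))
        (mu (some i) (some i) (some i) a b) ∈ Lsub F ψ := by
      refine traceless_mem_Lsub i _ _ ?_
      rw [Matrix.trace_sub, Matrix.trace_smul, Matrix.trace_single_eq_same]
      simp [ht]
    have hYX : elt F ψ (some i) (some i)
        (Y * X - t • Matrix.single k0 k0 (1:F))
        (mu (some i) (some i) (some i) b a) ∈ Lsub F ψ := by
      refine traceless_mem_Lsub i _ _ ?_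
      rw [Matrix.trace_sub, Matrix.trace_smul, Matrix.trace_single_eq_same]
      simp [htY]
    have hsc : t • elt F ψ (some i) (some i) (Matrix.single k0 k0 (1:F))
        (mu (some i) (some i) (some i) a b - mu (some i) (some i) (some i) b a)
        ∈ Lsub F ψ := Submodule.smul_mem _ t (key a b)
    have heq : elt F ψ (some i) (some i) X a * elt F ψ (some i) (some i) Y b
        - elt F ψ (some i) (some i) Y b * elt F ψ (some i) (some i) X a
        = elt F ψ (some i) (some i)
            (X * Y - t • Matrix.single k0 k0 (1:F))
            (mu (some i) (some i) (some i) a b)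
          - elt F ψ (some i) (some i)
            (Y * X - t • Matrix.single k0 k0 (1:F))
            (mu (some i) (some i) (some i) b a)
          + t • elt F ψ (some i) (some i) (Matrix.single k0 k0 (1:F))
            (mu (some i) (some i) (some i) a b - mu (some i) (some i) (some i) b a) := by
      rw [hmul, hmul, elt_sub_left, elt_sub_left, elt_smul_left, elt_smul_left,
        elt_sub_right, smul_sub]
      abel
    rw [heq]
    exact Submodule.add_mem _ (Submodule.sub_mem _ hXY hYX) hsc
  -- Step 3: reduce to pure tensors by bilinearity.
  induction u using TensorProduct.induction_on with
  | zero => simp [emb_zero]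
  | tmul X a =>
    induction v using TensorProduct.induction_on with
    | zero => simp [emb_zero]
    | tmul Y b => exact key2 X Y a b
    | add v1 v2 h1 h2 =>
      rw [emb_add]
      have : emb F ψ (some i, some i) (X ⊗ₜ a)
            * (emb F ψ (some i, some i) v1 + emb F ψ (some i, some i) v2)
          - (emb F ψ (some i, some i) v1 + emb F ψ (some i, some i) v2)
            * emb F ψ (some i, some i) (X ⊗ₜ a)
          = (emb F ψ (some i, some i) (X ⊗ₜ a) * emb F ψ (some i, some i) v1
              - emb F ψ (some i, some i) v1 * emb F ψ (some i, some i) (X ⊗ₜ a))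
            + (emb F ψ (some i, some i) (X ⊗ₜ a) * emb F ψ (some i, some i) v2
              - emb F ψ (some i, some i) v2 * emb F ψ (some i, some i) (X ⊗ₜ a)) := by
        rw [add_mul, mul_add]; abel
      rw [this]
      exact Submodule.add_mem _ h1 h2
  | add u1 u2 h1 h2 =>
    rw [emb_add]
    have : (emb F ψ (some i, some i) u1 + emb F ψ (some i, some i) u2)
          * emb F ψ (some i, some i) v
        - emb F ψ (some i, some i) v
          * (emb F ψ (some i, some i) u1 + emb F ψ (some i, some i) u2)
        = (emb F ψ (some i, some i) u1 * emb F ψ (some i, some i) v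
            - emb F ψ (some i, some i) v * emb F ψ (some i, some i) u1)
          + (emb F ψ (some i, some i) u2 * emb F ψ (some i, some i) v
            - emb F ψ (some i, some i) v * emb F ψ (some i, some i) u2) := by
      rw [add_mul, mul_add]; abel
    rw [this]
    exact Submodule.add_mem _ h1 h2
end
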